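/- Let K ≥ 5 and N ≥ 1 be integers. Define the points P_i = ((1 + i(K−1)/K)·N/K, N(K−i)/(K(i+1))) ∈ ℝ² for i ∈ {0,…,K} and Q_m = (mN/K, N(K−m)/(Km)) ∈ ℝ² for m ∈ {1, K−2, K−1, K}, and for j ∈ {1,…,K−1} define L_j(S) = N(K−j)/(Kj) − K(S − jN/K)/(j(j+1)). Then for every real S with N/K ≤ S ≤ N there exists a real R such that (S, R) lies in the convex hull of {P_0,…,P_K} ∪ {Q_1, Q_{K−2}, Q_{K−1}, Q_K} and 3(K−1)·R ≤ (3K−1)·max_{j ∈ {1,…,K−1}} L_j(S). -/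

import Mathlib

/-- The achievable storage-rate pair `P_i = ((1 + i(K−1)/K)·N/K, N(K−i)/(K(i+1)))` of the
structural-invariant coded shuffling scheme. -/
noncomputable def Ppt (K N i : ℕ) : ℝ × ℝ :=
  ((1 + (i : ℝ) * ((K : ℝ) - 1) / K) * N / K,
    (N : ℝ) * ((K : ℝ) - i) / ((K : ℝ) * ((i : ℝ) + 1)))

/-- The storage-rate point `Q_m = (mN/K, N(K−m)/(Km))` achieved by the aligned coded
shuffling scheme. -/
noncomputable def Qpt (K N m : ℕ) : ℝ × ℝ :=
  ((m : ℝ) * N / K, (N : ℝ) * ((K : ℝ) - m) / ((K : ℝ) * m))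

/-- The `j`-th lower-bound line on the worst-case communication rate:
`L_j(S) = N(K−j)/(Kj) − K(S − jN/K)/(j(j+1))`. -/
noncomputable def Lline (K N j : ℕ) (S : ℝ) : ℝ :=
  (N : ℝ) * ((K : ℝ) - (j : ℝ)) / ((K : ℝ) * (j : ℝ)) -
    (K : ℝ) * (S - (j : ℝ) * (N : ℝ) / (K : ℝ)) / ((j : ℝ) * ((j : ℝ) + 1))

lemma mem_hull_combo {A : Set (ℝ × ℝ)} {p q : ℝ × ℝ} (hp : p ∈ A) (hq : q ∈ A)
    {a b : ℝ} (ha : 0 ≤ a) (hb : 0 ≤ b) (hab : a + b = 1) :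
    (a * p.1 + b * q.1, a * p.2 + b * q.2) ∈ convexHull ℝ A := by
  have h := (convex_convexHull ℝ A) (subset_convexHull ℝ A hp) (subset_convexHull ℝ A hq) ha hb hab
  simpa [Prod.ext_iff, Prod.smul_def, smul_eq_mul] using h

lemma finish_sup (K N : ℕ) (hK : 5 ≤ K) (j : ℕ) (hj1 : 1 ≤ j) (hj2 : j ≤ K - 1)
    (S R : ℝ) (hne : (Finset.Icc 1 (K - 1)).Nonempty)
    (h : 3 * ((K : ℝ) - 1) * R ≤ (3 * (K : ℝ) - 1) * Lline K N j S) :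
    3 * ((K : ℝ) - 1) * R ≤
      (3 * (K : ℝ) - 1) * (Finset.Icc 1 (K - 1)).sup' hne (fun j => Lline K N j S) := by
  have hk : (5:ℝ) ≤ (K:ℝ) := by exact_mod_cast hK
  refine h.trans (mul_le_mul_of_nonneg_left ?_ (by linarith))
  exact Finset.le_sup' (fun j => Lline K N j S) (Finset.mem_Icc.mpr ⟨hj1, hj2⟩)

section Cases

variable (K N : ℕ)

set_option maxHeartbeats 1000000 in
/-- Case A : `N/K ≤ S ≤ N(2K−1)/K²`, segment `Q₁ – P₁` whose rate is exactly `L₁(S)`. -/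
lemma caseA_main (hK : 5 ≤ K) (hN : 1 ≤ N) (S : ℝ) (hS1 : (N : ℝ) / K ≤ S)
    (hA : S ≤ (N:ℝ) * (2*(K:ℝ) - 1) / (K:ℝ)^2) :
    ∃ R : ℝ, (S, R) ∈ convexHull ℝ
        ((Ppt K N '' {i | i ≤ K}) ∪ (Qpt K N '' {1, K - 2, K - 1, K})) ∧
      3 * ((K : ℝ) - 1) * R ≤
        (3 * (K : ℝ) - 1) * (Finset.Icc 1 (K - 1)).sup'
          (Finset.nonempty_Icc.mpr (Nat.le_sub_of_add_le (by omega))) (fun j => Lline K N j S) := by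
  have hk : (5:ℝ) ≤ (K:ℝ) := by exact_mod_cast hK
  have hn : (1:ℝ) ≤ (N:ℝ) := by exact_mod_cast hN
  have hk0 : (0:ℝ) < K := by linarith
  have hn0 : (0:ℝ) < N := by linarith
  have hkne : (K:ℝ) ≠ 0 := ne_of_gt hk0
  have hnne : (N:ℝ) ≠ 0 := ne_of_gt hn0
  have hk1ne : (K:ℝ) - 1 ≠ 0 := ne_of_gt (by linarith)
  set d : ℝ := (N:ℝ) * ((K:ℝ)-1) / (K:ℝ)^2 with hd_def
  set a : ℝ := ((N:ℝ) * (2*(K:ℝ) - 1) / (K:ℝ)^2 - S) / d with ha_def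
  set b : ℝ := (S - (N:ℝ)/(K:ℝ)) / d with hb_def
  have hd0 : 0 < d := by
    rw [hd_def]; exact div_pos (mul_pos hn0 (by linarith)) (by positivity)
  have ha : 0 ≤ a := by rw [ha_def]; apply div_nonneg (by linarith) hd0.le
  have hb : 0 ≤ b := by rw [hb_def]; apply div_nonneg (by linarith) hd0.le
  have hab : a + b = 1 := by rw [ha_def, hb_def, hd_def]; field_simp; ring
  have hp : Qpt K N 1 ∈ (Ppt K N '' {i | i ≤ K}) ∪ (Qpt K N '' {1, K - 2, K - 1, K}) :=
    Set.mem_union_right _ ⟨1, by simp, rfl⟩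
  have hq : Ppt K N 1 ∈ (Ppt K N '' {i | i ≤ K}) ∪ (Qpt K N '' {1, K - 2, K - 1, K}) :=
    Set.mem_union_left _ ⟨1, (by omega : 1 ≤ K), rfl⟩
  have hcoord : a * (Qpt K N 1).1 + b * (Ppt K N 1).1 = S := by
    rw [ha_def, hb_def, hd_def]; simp only [Qpt, Ppt, Nat.cast_one]
    field_simp; ring
  have hR : a * (Qpt K N 1).2 + b * (Ppt K N 1).2 = Lline K N 1 S := by
    rw [ha_def, hb_def, hd_def]; simp only [Qpt, Ppt, Lline, Nat.cast_one]
    field_simp; ring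
  refine ⟨a * (Qpt K N 1).2 + b * (Ppt K N 1).2, ?_, ?_⟩
  · have hm := mem_hull_combo hp hq ha hb hab
    rwa [hcoord] at hm
  · apply finish_sup K N hK 1 le_rfl (by omega)
    rw [hR]
    have hL2 : Lline K N 1 S * (2*(K:ℝ)) = 2*(N:ℝ)*((K:ℝ)-1) - (K:ℝ)^2*S + (K:ℝ)*(N:ℝ) := by
      simp only [Lline, Nat.cast_one]; field_simp; ring
    have hA' : S * (K:ℝ)^2 ≤ (N:ℝ) * (2*(K:ℝ) - 1) :=
      (le_div_iff₀ (by positivity : (0:ℝ) < (K:ℝ)^2)).mp hA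
    have hL : 0 ≤ Lline K N 1 S := by
      have h0 : 0 ≤ Lline K N 1 S * (2*(K:ℝ)) := by
        rw [hL2]
        nlinarith [hA', mul_pos hn0 (show (0:ℝ) < (K:ℝ)-1 by linarith)]
      nlinarith [h0, hk0]
    linarith [hL]

set_option maxHeartbeats 1000000 in
/-- Case D1 : `(K−2)N/K ≤ S ≤ (K−1)N/K`, segment `Q_{K−2} – Q_{K−1}`, rate `L_{K−2}(S)`. -/
lemma caseD1_main (hK : 5 ≤ K) (hN : 1 ≤ N) (S : ℝ)
    (hD : ((K:ℝ) - 2) * (N:ℝ) / (K:ℝ) ≤ S) (hD2 : S ≤ ((K:ℝ) - 1) * (N:ℝ) / (K:ℝ)) :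
    ∃ R : ℝ, (S, R) ∈ convexHull ℝ
        ((Ppt K N '' {i | i ≤ K}) ∪ (Qpt K N '' {1, K - 2, K - 1, K})) ∧
      3 * ((K : ℝ) - 1) * R ≤
        (3 * (K : ℝ) - 1) * (Finset.Icc 1 (K - 1)).sup'
          (Finset.nonempty_Icc.mpr (Nat.le_sub_of_add_le (by omega))) (fun j => Lline K N j S) := by
  have hk : (5:ℝ) ≤ (K:ℝ) := by exact_mod_cast hK
  have hn : (1:ℝ) ≤ (N:ℝ) := by exact_mod_cast hN
  have hk0 : (0:ℝ) < K := by linarith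
  have hn0 : (0:ℝ) < N := by linarith
  have hkne : (K:ℝ) ≠ 0 := ne_of_gt hk0
  have hnne : (N:ℝ) ≠ 0 := ne_of_gt hn0
  have hk1ne : (K:ℝ) - 1 ≠ 0 := ne_of_gt (by linarith)
  have hk2ne : (K:ℝ) - 2 ≠ 0 := ne_of_gt (by linarith)
  have hcK2 : ((K - 2 : ℕ) : ℝ) = (K:ℝ) - 2 := by
    rw [Nat.cast_sub (by omega)]; norm_num
  have hcK1 : ((K - 1 : ℕ) : ℝ) = (K:ℝ) - 1 := by
    rw [Nat.cast_sub (by omega)]; norm_num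
  set d : ℝ := (N:ℝ) / (K:ℝ) with hd_def
  set a : ℝ := (((K:ℝ)-1) * (N:ℝ)/(K:ℝ) - S) / d with ha_def
  set b : ℝ := (S - ((K:ℝ)-2) * (N:ℝ)/(K:ℝ)) / d with hb_def
  have hd0 : 0 < d := by rw [hd_def]; positivity
  have ha : 0 ≤ a := by rw [ha_def]; apply div_nonneg (by linarith) hd0.le
  have hb : 0 ≤ b := by rw [hb_def]; apply div_nonneg (by linarith) hd0.le
  have hab : a + b = 1 := by rw [ha_def, hb_def, hd_def]; field_simp; ring
  have hp : Qpt K N (K-2) ∈ (Ppt K N '' {i | i ≤ K}) ∪ (Qpt K N '' {1, K - 2, K - 1, K}) :=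
    Set.mem_union_right _ ⟨K-2, by simp, rfl⟩
  have hq : Qpt K N (K-1) ∈ (Ppt K N '' {i | i ≤ K}) ∪ (Qpt K N '' {1, K - 2, K - 1, K}) :=
    Set.mem_union_right _ ⟨K-1, by simp, rfl⟩
  have hcoord : a * (Qpt K N (K-2)).1 + b * (Qpt K N (K-1)).1 = S := by
    rw [ha_def, hb_def, hd_def]; simp only [Qpt, hcK2, hcK1]
    field_simp; ring
  have hR : a * (Qpt K N (K-2)).2 + b * (Qpt K N (K-1)).2 = Lline K N (K-2) S := by
    rw [ha_def, hb_def, hd_def]; simp only [Qpt, Lline, hcK2, hcK1]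
    rw [show ((K:ℝ)-2)*(((K:ℝ)-2)+1) = ((K:ℝ)-2)*((K:ℝ)-1) by ring]
    field_simp; ring
  refine ⟨a * (Qpt K N (K-2)).2 + b * (Qpt K N (K-1)).2, ?_, ?_⟩
  · have hm := mem_hull_combo hp hq ha hb hab
    rwa [hcoord] at hm
  · apply finish_sup K N hK (K-2) (by omega) (by omega)
    rw [hR]
    have hL2 : Lline K N (K-2) S * ((K:ℝ)*((K:ℝ)-2)*((K:ℝ)-1)) =
        2*(N:ℝ)*((K:ℝ)-1) - (K:ℝ)^2*S + (K:ℝ)*((K:ℝ)-2)*(N:ℝ) := by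
      simp only [Lline, hcK2]
      rw [show ((K:ℝ)-2)*(((K:ℝ)-2)+1) = ((K:ℝ)-2)*((K:ℝ)-1) by ring]
      field_simp; ring
    have hL : 0 ≤ Lline K N (K-2) S := by
      have hD2' : S * (K:ℝ) ≤ ((K:ℝ)-1) * (N:ℝ) := by
        rw [le_div_iff₀ hk0] at hD2; linarith
      have h0 : 0 ≤ Lline K N (K-2) S * ((K:ℝ)*((K:ℝ)-2)*((K:ℝ)-1)) := by
        rw [hL2]
        nlinarith [hD2', mul_pos hn0 (show (0:ℝ) < (K:ℝ)-2 by linarith), hk0]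
      nlinarith [h0, mul_pos (mul_pos hk0 (show (0:ℝ) < (K:ℝ)-2 by linarith))
        (show (0:ℝ) < (K:ℝ)-1 by linarith)]
    linarith [hL]

set_option maxHeartbeats 1000000 in
/-- Case D2 : `(K−1)N/K ≤ S ≤ N`, segment `Q_{K−1} – Q_K`, rate `L_{K−1}(S)`. -/
lemma caseD2_main (hK : 5 ≤ K) (hN : 1 ≤ N) (S : ℝ)
    (hD : ((K:ℝ) - 1) * (N:ℝ) / (K:ℝ) ≤ S) (hS2 : S ≤ (N:ℝ)) :
    ∃ R : ℝ, (S, R) ∈ convexHull ℝ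
        ((Ppt K N '' {i | i ≤ K}) ∪ (Qpt K N '' {1, K - 2, K - 1, K})) ∧
      3 * ((K : ℝ) - 1) * R ≤
        (3 * (K : ℝ) - 1) * (Finset.Icc 1 (K - 1)).sup'
          (Finset.nonempty_Icc.mpr (Nat.le_sub_of_add_le (by omega))) (fun j => Lline K N j S) := by
  have hk : (5:ℝ) ≤ (K:ℝ) := by exact_mod_cast hK
  have hn : (1:ℝ) ≤ (N:ℝ) := by exact_mod_cast hN
  have hk0 : (0:ℝ) < K := by linarith
  have hn0 : (0:ℝ) < N := by linarith
  have hkne : (K:ℝ) ≠ 0 := ne_of_gt hk0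
  have hnne : (N:ℝ) ≠ 0 := ne_of_gt hn0
  have hk1ne : (K:ℝ) - 1 ≠ 0 := ne_of_gt (by linarith)
  have hcK1 : ((K - 1 : ℕ) : ℝ) = (K:ℝ) - 1 := by
    rw [Nat.cast_sub (by omega)]; norm_num
  set d : ℝ := (N:ℝ) / (K:ℝ) with hd_def
  set a : ℝ := ((N:ℝ) - S) / d with ha_def
  set b : ℝ := (S - ((K:ℝ)-1) * (N:ℝ)/(K:ℝ)) / d with hb_def
  have hd0 : 0 < d := by rw [hd_def]; positivity
  have ha : 0 ≤ a := by rw [ha_def]; apply div_nonneg (by linarith) hd0.le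
  have hb : 0 ≤ b := by rw [hb_def]; apply div_nonneg (by linarith) hd0.le
  have hab : a + b = 1 := by rw [ha_def, hb_def, hd_def]; field_simp; ring
  have hp : Qpt K N (K-1) ∈ (Ppt K N '' {i | i ≤ K}) ∪ (Qpt K N '' {1, K - 2, K - 1, K}) :=
    Set.mem_union_right _ ⟨K-1, by simp, rfl⟩
  have hq : Qpt K N K ∈ (Ppt K N '' {i | i ≤ K}) ∪ (Qpt K N '' {1, K - 2, K - 1, K}) :=
    Set.mem_union_right _ ⟨K, by simp, rfl⟩
  have hcoord : a * (Qpt K N (K-1)).1 + b * (Qpt K N K).1 = S := by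
    rw [ha_def, hb_def, hd_def]; simp only [Qpt, hcK1]
    field_simp; ring
  have hR : a * (Qpt K N (K-1)).2 + b * (Qpt K N K).2 = Lline K N (K-1) S := by
    rw [ha_def, hb_def, hd_def]; simp only [Qpt, Lline, hcK1]
    rw [show ((K:ℝ)-1)*(((K:ℝ)-1)+1) = ((K:ℝ)-1)*(K:ℝ) by ring]
    field_simp; ring
  refine ⟨a * (Qpt K N (K-1)).2 + b * (Qpt K N K).2, ?_, ?_⟩
  · have hm := mem_hull_combo hp hq ha hb hab
    rwa [hcoord] at hm
  · apply finish_sup K N hK (K-1) (by omega) (by omega)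
    rw [hR]
    have hL2 : Lline K N (K-1) S * ((K:ℝ)*((K:ℝ)-1)) = (K:ℝ)*((N:ℝ) - S) := by
      simp only [Lline, hcK1]
      rw [show ((K:ℝ)-1)*(((K:ℝ)-1)+1) = ((K:ℝ)-1)*(K:ℝ) by ring]
      field_simp; ring
    have hL : 0 ≤ Lline K N (K-1) S := by
      have h0 : 0 ≤ Lline K N (K-1) S * ((K:ℝ)*((K:ℝ)-1)) := by
        rw [hL2]; nlinarith [hS2, hk0]
      nlinarith [h0, mul_pos hk0 (show (0:ℝ) < (K:ℝ)-1 by linarith)]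
    linarith [hL]

set_option maxHeartbeats 2000000 in
/-- Case B : `S` in the segment `P_i – P_{i+1}` with `1 ≤ i ≤ K−3`, left half. -/
lemma caseB1_ineq (hK : 5 ≤ K) (hN : 1 ≤ N) (i : ℕ) (hi1 : 1 ≤ i) (hiK : i ≤ K - 3) (S : ℝ)
    (hSlo : (N:ℝ)*((K:ℝ) + (i:ℝ)*((K:ℝ)-1))/(K:ℝ)^2 ≤ S)
    (hsplit : S ≤ ((i:ℝ)+1)*(N:ℝ)/(K:ℝ)) :
    3 * ((K : ℝ) - 1) *
        ((((N:ℝ)*((K:ℝ) + ((i:ℝ)+1)*((K:ℝ)-1))/(K:ℝ)^2 - S) / ((N:ℝ)*((K:ℝ)-1)/(K:ℝ)^2))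
            * (Ppt K N i).2
          + ((S - (N:ℝ)*((K:ℝ) + (i:ℝ)*((K:ℝ)-1))/(K:ℝ)^2) / ((N:ℝ)*((K:ℝ)-1)/(K:ℝ)^2))
            * (Ppt K N (i+1)).2)
      ≤ (3 * (K : ℝ) - 1) * Lline K N i S := by
  have hk : (5:ℝ) ≤ (K:ℝ) := by exact_mod_cast hK
  have hn : (1:ℝ) ≤ (N:ℝ) := by exact_mod_cast hN
  have hk0 : (0:ℝ) < K := by linarith
  have hn0 : (0:ℝ) < N := by linarith
  have hkne : (K:ℝ) ≠ 0 := ne_of_gt hk0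
  have hnne : (N:ℝ) ≠ 0 := ne_of_gt hn0
  have hk1ne : (K:ℝ) - 1 ≠ 0 := ne_of_gt (by linarith)
  have hx1 : (1:ℝ) ≤ (i:ℝ) := by exact_mod_cast hi1
  have hx3 : (i:ℝ) ≤ (K:ℝ) - 3 := by
    have h1 : ((i:ℕ):ℝ) ≤ ((K-3:ℕ):ℝ) := Nat.cast_le.mpr hiK
    rw [Nat.cast_sub (by omega)] at h1
    push_cast at h1; linarith
  have hxne : (i:ℝ) ≠ 0 := ne_of_gt (by linarith)
  have hx1ne : (i:ℝ) + 1 ≠ 0 := ne_of_gt (by linarith)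
  have hx2ne : (i:ℝ) + 2 ≠ 0 := ne_of_gt (by linarith)
  have hid : ((3*(K:ℝ)-1) * Lline K N i S
        - 3*((K:ℝ)-1) *
          ((((N:ℝ)*((K:ℝ) + ((i:ℝ)+1)*((K:ℝ)-1))/(K:ℝ)^2 - S) / ((N:ℝ)*((K:ℝ)-1)/(K:ℝ)^2))
              * (Ppt K N i).2
            + ((S - (N:ℝ)*((K:ℝ) + (i:ℝ)*((K:ℝ)-1))/(K:ℝ)^2) / ((N:ℝ)*((K:ℝ)-1)/(K:ℝ)^2))
              * (Ppt K N (i+1)).2))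
        * ((N:ℝ)*(i:ℝ)/(K:ℝ)^2)
      = (((i:ℝ)+1)*(N:ℝ)/(K:ℝ) - S) * (2*(N:ℝ)*((K:ℝ)-(i:ℝ))/((K:ℝ)*((i:ℝ)+1)))
        + (S - (N:ℝ)*((K:ℝ) + (i:ℝ)*((K:ℝ)-1))/(K:ℝ)^2)
          * (2*(N:ℝ)*((i:ℝ)-1)*((K:ℝ)-(i:ℝ)-1)/((K:ℝ)*((i:ℝ)+1)*((i:ℝ)+2))) := by
    simp only [Ppt, Lline]; push_cast
    field_simp
    ring
  have hc : 0 < (N:ℝ)*(i:ℝ)/(K:ℝ)^2 :=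
    div_pos (mul_pos hn0 (by linarith)) (by positivity)
  have hRHS : 0 ≤ (((i:ℝ)+1)*(N:ℝ)/(K:ℝ) - S) * (2*(N:ℝ)*((K:ℝ)-(i:ℝ))/((K:ℝ)*((i:ℝ)+1)))
        + (S - (N:ℝ)*((K:ℝ) + (i:ℝ)*((K:ℝ)-1))/(K:ℝ)^2)
          * (2*(N:ℝ)*((i:ℝ)-1)*((K:ℝ)-(i:ℝ)-1)/((K:ℝ)*((i:ℝ)+1)*((i:ℝ)+2))) := by
    apply add_nonneg
    · apply mul_nonneg (by linarith)
      apply div_nonneg (by nlinarith) (by positivity)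
    · apply mul_nonneg (by linarith)
      exact div_nonneg
        (mul_nonneg (mul_nonneg (by linarith : (0:ℝ) ≤ 2*(N:ℝ)) (by linarith)) (by linarith))
        (by positivity)
  have h0 : (0:ℝ) * ((N:ℝ)*(i:ℝ)/(K:ℝ)^2)
      ≤ ((3*(K:ℝ)-1) * Lline K N i S
        - 3*((K:ℝ)-1) *
          ((((N:ℝ)*((K:ℝ) + ((i:ℝ)+1)*((K:ℝ)-1))/(K:ℝ)^2 - S) / ((N:ℝ)*((K:ℝ)-1)/(K:ℝ)^2))
              * (Ppt K N i).2
            + ((S - (N:ℝ)*((K:ℝ) + (i:ℝ)*((K:ℝ)-1))/(K:ℝ)^2) / ((N:ℝ)*((K:ℝ)-1)/(K:ℝ)^2))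
              * (Ppt K N (i+1)).2))
        * ((N:ℝ)*(i:ℝ)/(K:ℝ)^2) := by
    rw [zero_mul, hid]; exact hRHS
  have hF := (mul_le_mul_iff_left₀ hc).mp h0
  linarith

set_option maxHeartbeats 2000000 in
/-- Case B : `S` in the segment `P_i – P_{i+1}` with `1 ≤ i ≤ K−3`, right half. -/
lemma caseB2_ineq (hK : 5 ≤ K) (hN : 1 ≤ N) (i : ℕ) (hi1 : 1 ≤ i) (hiK : i ≤ K - 3) (S : ℝ)
    (hsplit : ((i:ℝ)+1)*(N:ℝ)/(K:ℝ) ≤ S)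
    (hShi : S ≤ (N:ℝ)*((K:ℝ) + ((i:ℝ)+1)*((K:ℝ)-1))/(K:ℝ)^2) :
    3 * ((K : ℝ) - 1) *
        ((((N:ℝ)*((K:ℝ) + ((i:ℝ)+1)*((K:ℝ)-1))/(K:ℝ)^2 - S) / ((N:ℝ)*((K:ℝ)-1)/(K:ℝ)^2))
            * (Ppt K N i).2
          + ((S - (N:ℝ)*((K:ℝ) + (i:ℝ)*((K:ℝ)-1))/(K:ℝ)^2) / ((N:ℝ)*((K:ℝ)-1)/(K:ℝ)^2))
            * (Ppt K N (i+1)).2)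
      ≤ (3 * (K : ℝ) - 1) * Lline K N (i+1) S := by
  have hk : (5:ℝ) ≤ (K:ℝ) := by exact_mod_cast hK
  have hn : (1:ℝ) ≤ (N:ℝ) := by exact_mod_cast hN
  have hk0 : (0:ℝ) < K := by linarith
  have hn0 : (0:ℝ) < N := by linarith
  have hkne : (K:ℝ) ≠ 0 := ne_of_gt hk0
  have hnne : (N:ℝ) ≠ 0 := ne_of_gt hn0
  have hk1ne : (K:ℝ) - 1 ≠ 0 := ne_of_gt (by linarith)
  have hx1 : (1:ℝ) ≤ (i:ℝ) := by exact_mod_cast hi1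
  have hx3 : (i:ℝ) ≤ (K:ℝ) - 3 := by
    have h1 : ((i:ℕ):ℝ) ≤ ((K-3:ℕ):ℝ) := Nat.cast_le.mpr hiK
    rw [Nat.cast_sub (by omega)] at h1
    push_cast at h1; linarith
  have hxne : (i:ℝ) ≠ 0 := ne_of_gt (by linarith)
  have hx1ne : (i:ℝ) + 1 ≠ 0 := ne_of_gt (by linarith)
  have hx2ne : (i:ℝ) + 2 ≠ 0 := ne_of_gt (by linarith)
  have hid : ((3*(K:ℝ)-1) * Lline K N (i+1) S
        - 3*((K:ℝ)-1) *
          ((((N:ℝ)*((K:ℝ) + ((i:ℝ)+1)*((K:ℝ)-1))/(K:ℝ)^2 - S) / ((N:ℝ)*((K:ℝ)-1)/(K:ℝ)^2))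
              * (Ppt K N i).2
            + ((S - (N:ℝ)*((K:ℝ) + (i:ℝ)*((K:ℝ)-1))/(K:ℝ)^2) / ((N:ℝ)*((K:ℝ)-1)/(K:ℝ)^2))
              * (Ppt K N (i+1)).2))
        * ((N:ℝ)*((K:ℝ)-(i:ℝ)-1)/(K:ℝ)^2)
      = ((N:ℝ)*((K:ℝ) + ((i:ℝ)+1)*((K:ℝ)-1))/(K:ℝ)^2 - S)
          * (2*(N:ℝ)*((i:ℝ)-1)*((K:ℝ)-(i:ℝ)-1)/((K:ℝ)*((i:ℝ)+1)*((i:ℝ)+2)))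
        + (S - ((i:ℝ)+1)*(N:ℝ)/(K:ℝ))
          * (2*(N:ℝ)*((K:ℝ)-(i:ℝ)-1)/((K:ℝ)*((i:ℝ)+2))) := by
    simp only [Ppt, Lline]; push_cast
    field_simp
    ring
  have hc : 0 < (N:ℝ)*((K:ℝ)-(i:ℝ)-1)/(K:ℝ)^2 :=
    div_pos (mul_pos hn0 (by linarith)) (by positivity)
  have hRHS : 0 ≤ ((N:ℝ)*((K:ℝ) + ((i:ℝ)+1)*((K:ℝ)-1))/(K:ℝ)^2 - S)
          * (2*(N:ℝ)*((i:ℝ)-1)*((K:ℝ)-(i:ℝ)-1)/((K:ℝ)*((i:ℝ)+1)*((i:ℝ)+2)))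
        + (S - ((i:ℝ)+1)*(N:ℝ)/(K:ℝ))
          * (2*(N:ℝ)*((K:ℝ)-(i:ℝ)-1)/((K:ℝ)*((i:ℝ)+2))) := by
    apply add_nonneg
    · apply mul_nonneg (by linarith)
      exact div_nonneg
        (mul_nonneg (mul_nonneg (by linarith : (0:ℝ) ≤ 2*(N:ℝ)) (by linarith)) (by linarith))
        (by positivity)
    · apply mul_nonneg (by linarith)
      apply div_nonneg (by nlinarith) (by positivity)
  have h0 : (0:ℝ) * ((N:ℝ)*((K:ℝ)-(i:ℝ)-1)/(K:ℝ)^2)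
      ≤ ((3*(K:ℝ)-1) * Lline K N (i+1) S
        - 3*((K:ℝ)-1) *
          ((((N:ℝ)*((K:ℝ) + ((i:ℝ)+1)*((K:ℝ)-1))/(K:ℝ)^2 - S) / ((N:ℝ)*((K:ℝ)-1)/(K:ℝ)^2))
              * (Ppt K N i).2
            + ((S - (N:ℝ)*((K:ℝ) + (i:ℝ)*((K:ℝ)-1))/(K:ℝ)^2) / ((N:ℝ)*((K:ℝ)-1)/(K:ℝ)^2))
              * (Ppt K N (i+1)).2))
        * ((N:ℝ)*((K:ℝ)-(i:ℝ)-1)/(K:ℝ)^2) := by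
    rw [zero_mul, hid]; exact hRHS
  have hF := (mul_le_mul_iff_left₀ hc).mp h0
  linarith

set_option maxHeartbeats 1000000 in
/-- Case B : the coordinate identity for the segment `P_i – P_{i+1}`. -/
lemma caseB_coord (hK : 5 ≤ K) (hN : 1 ≤ N) (i : ℕ) (S : ℝ) :
    (((N:ℝ)*((K:ℝ) + ((i:ℝ)+1)*((K:ℝ)-1))/(K:ℝ)^2 - S) / ((N:ℝ)*((K:ℝ)-1)/(K:ℝ)^2))
        * (Ppt K N i).1
      + ((S - (N:ℝ)*((K:ℝ) + (i:ℝ)*((K:ℝ)-1))/(K:ℝ)^2) / ((N:ℝ)*((K:ℝ)-1)/(K:ℝ)^2))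
        * (Ppt K N (i+1)).1 = S := by
  have hk : (5:ℝ) ≤ (K:ℝ) := by exact_mod_cast hK
  have hn : (1:ℝ) ≤ (N:ℝ) := by exact_mod_cast hN
  have hkne : (K:ℝ) ≠ 0 := ne_of_gt (by linarith)
  have hnne : (N:ℝ) ≠ 0 := ne_of_gt (by linarith)
  have hk1ne : (K:ℝ) - 1 ≠ 0 := ne_of_gt (by linarith)
  simp only [Ppt]; push_cast
  field_simp
  ring

set_option maxHeartbeats 1000000 in
/-- Case B : `N(2K−1)/K² ≤ S ≤ (K−2)N/K`, segments `P_i – P_{i+1}`. -/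
lemma caseB_main (hK : 5 ≤ K) (hN : 1 ≤ N) (S : ℝ)
    (hA : (N:ℝ) * (2*(K:ℝ) - 1) / (K:ℝ)^2 < S) (hD : S < ((K:ℝ) - 2) * (N:ℝ) / (K:ℝ)) :
    ∃ R : ℝ, (S, R) ∈ convexHull ℝ
        ((Ppt K N '' {i | i ≤ K}) ∪ (Qpt K N '' {1, K - 2, K - 1, K})) ∧
      3 * ((K : ℝ) - 1) * R ≤
        (3 * (K : ℝ) - 1) * (Finset.Icc 1 (K - 1)).sup'
          (Finset.nonempty_Icc.mpr (Nat.le_sub_of_add_le (by omega))) (fun j => Lline K N j S) := by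
  have hk : (5:ℝ) ≤ (K:ℝ) := by exact_mod_cast hK
  have hn : (1:ℝ) ≤ (N:ℝ) := by exact_mod_cast hN
  have hk0 : (0:ℝ) < K := by linarith
  have hn0 : (0:ℝ) < N := by linarith
  have hkne : (K:ℝ) ≠ 0 := ne_of_gt hk0
  have hnne : (N:ℝ) ≠ 0 := ne_of_gt hn0
  have hk1ne : (K:ℝ) - 1 ≠ 0 := ne_of_gt (by linarith)
  have hcK2 : ((K - 2 : ℕ) : ℝ) = (K:ℝ) - 2 := by
    rw [Nat.cast_sub (by omega)]; norm_num
  set t : ℝ := (S*(K:ℝ)^2 - (N:ℝ)*(K:ℝ)) / ((N:ℝ)*((K:ℝ)-1)) with ht_def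
  have hden : (0:ℝ) < (N:ℝ)*((K:ℝ)-1) := by nlinarith
  have ht1 : 1 ≤ t := by
    rw [ht_def, le_div_iff₀ hden]
    have h' : (N:ℝ) * (2*(K:ℝ) - 1) < S * (K:ℝ)^2 := by
      rw [div_lt_iff₀ (by positivity : (0:ℝ) < (K:ℝ)^2)] at hA; linarith
    nlinarith
  have ht2 : t < (K:ℝ) - 2 := by
    rw [ht_def, div_lt_iff₀ hden]
    have h' : S * (K:ℝ) < ((K:ℝ)-2) * (N:ℝ) := by
      rw [lt_div_iff₀ hk0] at hD; linarith
    nlinarith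
  set i : ℕ := ⌊t⌋₊ with hi_def
  have hi1 : 1 ≤ i := Nat.le_floor (by exact_mod_cast ht1)
  have hxle : (i:ℝ) ≤ t := Nat.floor_le (by linarith)
  have hxgt : t < (i:ℝ) + 1 := Nat.lt_floor_add_one t
  have hx1 : (1:ℝ) ≤ (i:ℝ) := by exact_mod_cast hi1
  have hiK : i ≤ K - 3 := by
    have hlt : (i:ℝ) < ((K - 2 : ℕ):ℝ) := by rw [hcK2]; linarith
    have := Nat.cast_lt.mp hlt
    omega
  have hSlo : (N:ℝ)*((K:ℝ) + (i:ℝ)*((K:ℝ)-1))/(K:ℝ)^2 ≤ S := by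
    have h' : (i:ℝ) * ((N:ℝ)*((K:ℝ)-1)) ≤ S*(K:ℝ)^2 - (N:ℝ)*(K:ℝ) := by
      rw [ht_def, le_div_iff₀ hden] at hxle; linarith
    rw [div_le_iff₀ (by positivity : (0:ℝ) < (K:ℝ)^2)]
    nlinarith
  have hShi : S ≤ (N:ℝ)*((K:ℝ) + ((i:ℝ)+1)*((K:ℝ)-1))/(K:ℝ)^2 := by
    have h' : S*(K:ℝ)^2 - (N:ℝ)*(K:ℝ) ≤ ((i:ℝ)+1) * ((N:ℝ)*((K:ℝ)-1)) := by
      rw [ht_def, div_lt_iff₀ hden] at hxgt; linarith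
    rw [le_div_iff₀ (by positivity : (0:ℝ) < (K:ℝ)^2)]
    nlinarith
  set d : ℝ := (N:ℝ)*((K:ℝ)-1)/(K:ℝ)^2 with hd_def
  set a : ℝ := ((N:ℝ)*((K:ℝ) + ((i:ℝ)+1)*((K:ℝ)-1))/(K:ℝ)^2 - S) / d with ha_def
  set b : ℝ := (S - (N:ℝ)*((K:ℝ) + (i:ℝ)*((K:ℝ)-1))/(K:ℝ)^2) / d with hb_def
  have hd0 : 0 < d := by
    rw [hd_def]; exact div_pos (mul_pos hn0 (by linarith)) (by positivity)
  have ha : 0 ≤ a := by rw [ha_def]; apply div_nonneg (by linarith) hd0.le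
  have hb : 0 ≤ b := by rw [hb_def]; apply div_nonneg (by linarith) hd0.le
  have hab : a + b = 1 := by rw [ha_def, hb_def, hd_def]; field_simp; ring
  have hp : Ppt K N i ∈ (Ppt K N '' {i | i ≤ K}) ∪ (Qpt K N '' {1, K - 2, K - 1, K}) :=
    Set.mem_union_left _ ⟨i, (by omega : i ≤ K), rfl⟩
  have hq : Ppt K N (i+1) ∈ (Ppt K N '' {i | i ≤ K}) ∪ (Qpt K N '' {1, K - 2, K - 1, K}) :=
    Set.mem_union_left _ ⟨i+1, (by omega : i+1 ≤ K), rfl⟩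
  have hcoord : a * (Ppt K N i).1 + b * (Ppt K N (i+1)).1 = S := by
    rw [ha_def, hb_def, hd_def]; exact caseB_coord K N hK hN i S
  refine ⟨a * (Ppt K N i).2 + b * (Ppt K N (i+1)).2, ?_, ?_⟩
  · have hm := mem_hull_combo hp hq ha hb hab
    rwa [hcoord] at hm
  · by_cases hsplit : S ≤ ((i:ℝ)+1)*(N:ℝ)/(K:ℝ)
    · apply finish_sup K N hK i (by omega) (by omega)
      rw [ha_def, hb_def, hd_def]
      exact caseB1_ineq K N hK hN i hi1 hiK S hSlo hsplit
    · push_neg at hsplit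
      apply finish_sup K N hK (i+1) (by omega) (by omega)
      rw [ha_def, hb_def, hd_def]
      exact caseB2_ineq K N hK hN i hi1 hiK S hsplit.le hShi
end Cases

theorem aligned_achievable_within_gap (K N : ℕ) (hK : 5 ≤ K) (hN : 1 ≤ N) :
    ∀ S : ℝ, (N : ℝ) / K ≤ S → S ≤ (N : ℝ) →
      ∃ R : ℝ, (S, R) ∈ convexHull ℝ
          ((Ppt K N '' {i | i ≤ K}) ∪ (Qpt K N '' {1, K - 2, K - 1, K})) ∧
        3 * ((K : ℝ) - 1) * R ≤
          (3 * (K : ℝ) - 1) * (Finset.Icc 1 (K - 1)).sup'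
            (Finset.nonempty_Icc.mpr (by omega)) (fun j => Lline K N j S) := by
  intro S hS1 hS2
  by_cases hA : S ≤ (N:ℝ) * (2*(K:ℝ) - 1) / (K:ℝ)^2
  · exact caseA_main K N hK hN S hS1 hA
  · by_cases hD : ((K:ℝ) - 2) * (N:ℝ) / (K:ℝ) ≤ S
    · by_cases hD2 : S ≤ ((K:ℝ) - 1) * (N:ℝ) / (K:ℝ)
      · exact caseD1_main K N hK hN S hD hD2
      · exact caseD2_main K N hK hN S (le_of_not_ge hD2) hS2
    · push_neg at hA hD
      exact caseB_main K N hK hN S hA hD
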